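/- Let X and Y be finite random variables with joint distribution P_XY, where P_X(x) > 0 for all x and P_Y(y) > 0 for all y. For ε > 0 define ψ2(ε, P_XY) = max over x of E_{Y ~ P_{Y|X=x}}[max{0, 1 − exp(ε)/exp(i(x;Y))}], where i(x;y) = log(P_{XY}(x,y)/(P_X(x)P_Y(y))) is the information density. Then for all finite random variables X, Y, Z forming a Markov chain X − Y − Z (i.e., P_{XZ|Y} = P_{X|Y} × P_{Z|Y}), we have ψ2(ε, P_{Z|Y} ∘ P_XY) ≤ ψ2(ε, P_XY), where P_{Z|Y} ∘ P_XY denotes the joint distribution of (X,Z) obtained by marginalizing out Y. That is, ψ2 is closed under post-processing. -/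

import Mathlib

open Real Finset
open scoped Classical

noncomputable section

/-- Marginal distribution of the first coordinate of a joint distribution. -/
def margX {X Y : Type} [Fintype Y] (P : X → Y → ℝ) (x : X) : ℝ := ∑ y, P x y

/-- Marginal distribution of the second coordinate of a joint distribution. -/
def margY {X Y : Type} [Fintype X] (P : X → Y → ℝ) (y : Y) : ℝ := ∑ x, P x y

/-- `P` is a joint probability distribution on `X × Y`. -/
def IsJoint {X Y : Type} [Fintype X] [Fintype Y] (P : X → Y → ℝ) : Prop :=
  (∀ x y, 0 ≤ P x y) ∧ (∑ x, ∑ y, P x y) = 1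

/-- Conditional probability `P_{Y|X=x}(y)` of the second coordinate given the first. -/
def condYX {X Y : Type} [Fintype Y] (P : X → Y → ℝ) (x : X) (y : Y) : ℝ :=
  P x y / margX P x

/-- Information density `i(x;y) = log (P_{XY}(x,y) / (P_X(x) P_Y(y)))`. -/
def infoDen {X Y : Type} [Fintype X] [Fintype Y] (P : X → Y → ℝ) (x : X) (y : Y) : ℝ :=
  Real.log (P x y / (margX P x * margY P y))

/-- `ψ₂(ε, P_XY) = max_x E_{Y ~ P_{Y|X=x}}[max {0, 1 - e^ε / e^{i(x;Y)}}]`. -/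
def psi2 {X Y : Type} [Fintype X] [Fintype Y] (P : X → Y → ℝ) (ε : ℝ) : ℝ :=
  ⨆ x, ∑ y, condYX P x y * max 0 (1 - Real.exp ε / Real.exp (infoDen P x y))

/-- `K` is a Markov kernel (a conditional distribution). -/
def IsKernel {Y Z : Type} [Fintype Z] (K : Y → Z → ℝ) : Prop :=
  (∀ y z, 0 ≤ K y z) ∧ ∀ y, (∑ z, K y z) = 1

/-- Joint distribution of `(X, Z)` obtained by post-processing `Y` with the kernel `K`
(marginalizing out `Y`); this encodes the Markov chain `X - Y - Z`. -/
def pushKernel {X Y Z : Type} [Fintype Y] (P : X → Y → ℝ) (K : Y → Z → ℝ)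
    (x : X) (z : Z) : ℝ :=
  ∑ y, P x y * K y z


/-- Key pointwise identity for a single term of the `psi2` sum. -/
lemma term_eq (p pX m e : ℝ) (hp : 0 ≤ p) (hpX : 0 < pX) (hm : 0 ≤ m)
    (he : 0 < e) (h0 : m = 0 → p = 0) :
    p / pX * max 0 (1 - e / Real.exp (Real.log (p / (pX * m)))) =
      max 0 (p - e * (pX * m)) / pX := by
  rcases eq_or_lt_of_le hp with hp0 | hp0
  · rw [← hp0]
    simp only [zero_div, zero_mul, zero_sub]
    rw [max_eq_left (neg_nonpos.mpr (by positivity)), zero_div]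
  · have hm0 : 0 < m := by
      rcases eq_or_lt_of_le hm with h | h
      · exact absurd (h0 h.symm) (ne_of_gt hp0)
      · exact h
    have hpos : 0 < p / (pX * m) := div_pos hp0 (mul_pos hpX hm0)
    rw [Real.exp_log hpos]
    have h1 : 1 - e / (p / (pX * m)) = (p - e * (pX * m)) / p := by
      field_simp
    rw [h1]
    rcases le_or_gt (p - e * (pX * m)) 0 with hs | hs
    · rw [max_eq_left hs, max_eq_left (div_nonpos_of_nonpos_of_nonneg hs hp0.le), mul_zero,
        zero_div]
    · rw [max_eq_right hs.le, max_eq_right (div_nonneg hs.le hp0.le)]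
      field_simp

lemma max0_sum_le {ι : Type*} (s : Finset ι) (f : ι → ℝ) :
    max 0 (∑ i ∈ s, f i) ≤ ∑ i ∈ s, max 0 (f i) := by
  apply max_le
  · exact Finset.sum_nonneg fun i _ => le_max_left 0 (f i)
  · exact Finset.sum_le_sum fun i _ => le_max_right 0 (f i)

/-- `ψ₂` is closed under post-processing: for finite random variables
`X, Y, Z` forming a Markov chain `X - Y - Z` (so that the joint distribution of `(X, Z)`
is obtained by marginalizing `Y` out through the kernel `P_{Z|Y}`),
`ψ₂(ε, P_{Z|Y} ∘ P_XY) ≤ ψ₂(ε, P_XY)`. -/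
theorem psi2_closed_under_post_processing
    {X Y Z : Type} [Fintype X] [Fintype Y] [Fintype Z]
    (P : X → Y → ℝ) (hP : IsJoint P)
    (hPX : ∀ x, 0 < margX P x) (hPY : ∀ y, 0 < margY P y)
    (K : Y → Z → ℝ) (hK : IsKernel K)
    (ε : ℝ) (hε : 0 < ε) :
    psi2 (pushKernel P K) ε ≤ psi2 P ε := by
  classical
  have hPnn := hP.1
  have hKnn := hK.1
  have hKsum := hK.2
  set e := Real.exp ε with he_def
  have he : 0 < e := Real.exp_pos ε
  set Q := pushKernel P K with hQ
  -- marginals of Q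
  have hQnn : ∀ x z, 0 ≤ Q x z := fun x z =>
    Finset.sum_nonneg fun y _ => mul_nonneg (hPnn x y) (hKnn y z)
  have hQX : ∀ x, margX Q x = margX P x := by
    intro x
    simp only [margX, hQ, pushKernel]
    rw [Finset.sum_comm]
    simp only [← Finset.mul_sum]
    exact Finset.sum_congr rfl fun y _ => by rw [hKsum y, mul_one]
  have hQZ : ∀ z, margY Q z = ∑ y, margY P y * K y z := by
    intro z
    simp only [margY, hQ, pushKernel]
    rw [Finset.sum_comm]
    exact Finset.sum_congr rfl fun y _ => by rw [Finset.sum_mul]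
  have hQZnn : ∀ z, 0 ≤ margY Q z := fun z => by
    rw [hQZ z]
    exact Finset.sum_nonneg fun y _ => mul_nonneg (hPY y).le (hKnn y z)
  -- the pointwise bound
  have key : ∀ x,
      (∑ z, condYX Q x z * max 0 (1 - e / Real.exp (infoDen Q x z))) ≤
      (∑ y, condYX P x y * max 0 (1 - e / Real.exp (infoDen P x y))) := by
    intro x
    have hpX := hPX x
    have hL : ∀ z, condYX Q x z * max 0 (1 - e / Real.exp (infoDen Q x z)) =
        max 0 (Q x z - e * (margX P x * margY Q z)) / margX P x := by
      intro z
      have h0 : margY Q z = 0 → Q x z = 0 := by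
        intro hz
        have := hQZ z
        rw [hz] at this
        have hall : ∀ y ∈ Finset.univ, margY P y * K y z = 0 := by
          intro y _
          have := (Finset.sum_eq_zero_iff_of_nonneg
            (fun y _ => mul_nonneg (hPY y).le (hKnn y z))).1 this.symm y (Finset.mem_univ y)
          exact this
        have hK0 : ∀ y, K y z = 0 := by
          intro y
          have := hall y (Finset.mem_univ y)
          exact (mul_eq_zero.1 this).resolve_left (ne_of_gt (hPY y))
        simp only [hQ, pushKernel]
        exact Finset.sum_eq_zero fun y _ => by rw [hK0 y, mul_zero]
      have := term_eq (Q x z) (margX P x) (margY Q z) e (hQnn x z) hpX (hQZnn z) he h0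
      simpa [condYX, infoDen, hQX x] using this
    have hR : ∀ y, condYX P x y * max 0 (1 - e / Real.exp (infoDen P x y)) =
        max 0 (P x y - e * (margX P x * margY P y)) / margX P x := by
      intro y
      have := term_eq (P x y) (margX P x) (margY P y) e (hPnn x y) hpX (hPY y).le he
        (fun h => absurd h (ne_of_gt (hPY y)))
      simpa [condYX, infoDen] using this
    simp only [hL, hR]
    simp only [div_eq_mul_inv, ← Finset.sum_mul]
    apply mul_le_mul_of_nonneg_right _ (inv_nonneg.2 hpX.le)
    calc ∑ z, max 0 (Q x z - e * (margX P x * margY Q z))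
        = ∑ z, max 0 (∑ y, (P x y - e * (margX P x * margY P y)) * K y z) := by
          apply Finset.sum_congr rfl
          intro z _
          congr 1
          rw [hQZ z]
          simp only [hQ, pushKernel, hQZ z, Finset.mul_sum, ← Finset.sum_sub_distrib]
          apply Finset.sum_congr rfl
          intro y _
          ring
      _ ≤ ∑ z, ∑ y, max 0 ((P x y - e * (margX P x * margY P y)) * K y z) := by
          exact Finset.sum_le_sum fun z _ => max0_sum_le _ _
      _ = ∑ y, max 0 (P x y - e * (margX P x * margY P y)) := by
          rw [Finset.sum_comm]
          apply Finset.sum_congr rfl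
          intro y _
          have : ∀ z, max 0 ((P x y - e * (margX P x * margY P y)) * K y z) =
              max 0 (P x y - e * (margX P x * margY P y)) * K y z := by
            intro z
            rw [max_mul_of_nonneg _ _ (hKnn y z), zero_mul]
          simp only [this, ← Finset.mul_sum, hKsum y, mul_one]
  -- take supremum
  rcases isEmpty_or_nonempty X with hX | hX
  · simp [psi2, Real.iSup_of_isEmpty]
  · apply ciSup_mono
    · exact (Set.finite_range _).bddAbove
    · exact key
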